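/- arXiv:2005.07880 — 2 statements merged into one kernel-verified Lean document; each statement's English description precedes it below -/
import Mathlib

section
/- Let w : L → ℝ be a weight function with w(ℓ) ≠ 0 for every ℓ ∈ L, define g(P) = Σ_{ℓ ∈ E(P)} w(ℓ) for each P ⊆ P_m, and suppose no two distinct links have identical columns of the routing matrix (for all ℓ ≠ ℓ' there is p with r(p,ℓ) ≠ r(p,ℓ')). Then the map sending a link ℓ to the set {p ∈ P_m : r(p,ℓ) = 1} is a bijection from L onto the collection {P ⊆ P_m : g(P) ≠ 0}; in particular, the matrix whose columns are the indicator vectors of the sets P with g(P) ≠ 0 equals the routing matrix up to a permutation of columns. -/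
open Finset

/-- The exact link set `E(P)`: links traversed by every path in `P` and by no path outside `P`. -/
def exactLinks {ι Λ : Type*} [Fintype ι] [Fintype Λ] [DecidableEq ι] (r : ι → Λ → Bool)
    (P : Finset ι) : Finset Λ :=
  Finset.univ.filter (fun ℓ => (∀ p ∈ P, r p ℓ = true) ∧ (∀ p ∉ P, r p ℓ = false))

lemma mem_exactLinks_iff {ι Λ : Type*} [Fintype ι] [Fintype Λ] [DecidableEq ι]
    (r : ι → Λ → Bool) (P : Finset ι) (ℓ : Λ) :
    ℓ ∈ exactLinks r P ↔ Finset.univ.filter (fun p : ι => r p ℓ = true) = P := by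
  simp only [exactLinks, mem_filter, mem_univ, true_and]
  constructor
  · rintro ⟨h1, h2⟩
    ext p
    simp only [mem_filter, mem_univ, true_and]
    constructor
    · intro hp; by_contra hpP; simpa [h2 p hpP] using hp
    · exact h1 p
  · rintro rfl
    constructor
    · intro p hp; simpa using (mem_filter.mp hp).2
    · intro p hp
      simp only [mem_filter, mem_univ, true_and] at hp
      simpa using hp

lemma exactLinks_col {ι Λ : Type*} [Fintype ι] [Fintype Λ] [DecidableEq ι] [DecidableEq Λ]
    (r : ι → Λ → Bool)
    (hdist : ∀ ℓ ℓ' : Λ, ℓ ≠ ℓ' → ∃ p : ι, r p ℓ ≠ r p ℓ') (ℓ : Λ) :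
    exactLinks r (Finset.univ.filter (fun p : ι => r p ℓ = true)) = {ℓ} := by
  ext ℓ'
  rw [mem_exactLinks_iff, Finset.mem_singleton]
  constructor
  · intro h
    by_contra hne
    obtain ⟨p, hp⟩ := hdist ℓ' ℓ hne
    have := Finset.ext_iff.mp h p
    simp only [mem_filter, mem_univ, true_and] at this
    cases h1 : r p ℓ' <;> cases h2 : r p ℓ <;> simp [h1, h2] at this hp
  · rintro rfl; rfl

/-- Under distinct columns and nowhere-zero weights, the map sending a link to the set
of paths traversing it is a bijection from the links onto the path sets with nonzero
exact weight sum. -/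
theorem links_bijOn_support {ι Λ : Type*} [Fintype ι] [Fintype Λ]
    [DecidableEq ι] (r : ι → Λ → Bool) (w : Λ → ℝ)
    (hw : ∀ ℓ : Λ, w ℓ ≠ 0)
    (hdist : ∀ ℓ ℓ' : Λ, ℓ ≠ ℓ' → ∃ p : ι, r p ℓ ≠ r p ℓ') :
    Set.BijOn (fun ℓ : Λ => Finset.univ.filter (fun p : ι => r p ℓ = true))
      Set.univ
      {P : Finset ι | (∑ ℓ ∈ exactLinks r P, w ℓ) ≠ 0} := by
  classical
  refine ⟨?_, ?_, ?_⟩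
  · intro ℓ _
    simp only [Set.mem_setOf_eq, exactLinks_col r hdist ℓ, Finset.sum_singleton]
    exact hw ℓ
  · intro ℓ _ ℓ' _ h
    by_contra hne
    obtain ⟨p, hp⟩ := hdist ℓ ℓ' hne
    have := Finset.ext_iff.mp h p
    simp only [mem_filter, mem_univ, true_and] at this
    cases h1 : r p ℓ <;> cases h2 : r p ℓ' <;> simp [h1, h2] at this hp
  · intro P hP
    simp only [Set.mem_setOf_eq] at hP
    have hne : (exactLinks r P).Nonempty := by
      by_contra h
      rw [Finset.not_nonempty_iff_eq_empty] at h
      simp [h] at hP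
    obtain ⟨ℓ, hℓ⟩ := hne
    exact ⟨ℓ, Set.mem_univ ℓ, (mem_exactLinks_iff r P ℓ).mp hℓ⟩
end

section
/- Let S be a finite set, let f, g be real-valued functions on subsets of S satisfying f(P) = Σ_{Q : P ⊆ Q ⊆ S} g(Q) for all P ⊆ S, let 𝓑 be a collection of subsets of S that is pairwise incomparable (no B, B' ∈ 𝓑 satisfy B ⊊ B'), and let s be a positive integer. Assume: (i) g(P) ≠ 0 only if P ⊆ B for some B ∈ 𝓑; and (ii) g(P) = 0 for every P with |P| > s and P ∉ 𝓑. Then for every subset P with P ⊆ B for some B ∈ 𝓑, such that |P| ≤ s and every B ∈ 𝓑 containing P satisfies |B| > s, one has g(P) = Σ_{Q : P ⊆ Q ⊆ S, |Q| ≤ s} (−1)^{|Q| − |P|} f(Q) − Σ_{B ∈ 𝓑 : B ⊇ P} (−1)^{s − |P|} C(|B| − |P| − 1, s − |P|) f(B), where C(·,·) denotes the binomial coefficient. -/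
open Finset

lemma alt_partial (n m : ℕ) :
    ∑ j ∈ range (m+1), (-1:ℝ)^j * (n+1).choose j = (-1)^m * (n.choose m) := by
  induction m with
  | zero => simp
  | succ m ih =>
    rw [sum_range_succ, ih, Nat.choose_succ_succ (n) (m)]
    push_cast
    ring

lemma interval_card_sum {ι : Type*} [Fintype ι] [DecidableEq ι] (P B : Finset ι) (hPB : P ⊆ B)
    (F : ℕ → ℝ) :
    ∑ Q ∈ univ.filter (fun Q => P ⊆ Q ∧ Q ⊆ B), F Q.card
      = ∑ m ∈ range ((B.card - P.card) + 1), ((B.card - P.card).choose m) * F (P.card + m) := by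
  have h1 : ∑ Q ∈ univ.filter (fun Q => P ⊆ Q ∧ Q ⊆ B), F Q.card
      = ∑ A ∈ (B \ P).powerset, F (P.card + A.card) := by
    apply Finset.sum_nbij' (fun Q => Q \ P) (fun A => P ∪ A)
    · intro Q hQ
      simp only [mem_filter, mem_univ, true_and] at hQ
      exact Finset.mem_powerset.2 (Finset.sdiff_subset_sdiff hQ.2 (Finset.Subset.refl P))
    · intro A hA
      simp only [mem_powerset] at hA
      simp only [mem_filter, mem_univ, true_and]
      exact ⟨Finset.subset_union_left, Finset.union_subset hPB ((hA.trans (Finset.sdiff_subset)))⟩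
    · intro Q hQ
      simp only [mem_filter, mem_univ, true_and] at hQ
      exact Finset.union_sdiff_of_subset hQ.1
    · intro A hA
      simp only [mem_powerset] at hA
      have hd : Disjoint P A := Finset.disjoint_sdiff.mono_right hA
      rw [Finset.union_sdiff_cancel_left hd]
    · intro Q hQ
      simp only [mem_filter, mem_univ, true_and] at hQ
      rw [Finset.card_sdiff_of_subset hQ.1, Nat.add_sub_cancel' (Finset.card_le_card hQ.1)]
  rw [h1, Finset.sum_powerset_apply_card (fun m => F (P.card + m)), Finset.card_sdiff_of_subset hPB]
  simp [nsmul_eq_mul]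

lemma alt_full (n : ℕ) :
    ∑ m ∈ range (n+1), (-1:ℝ)^m * (n.choose m) = if n = 0 then 1 else 0 := by
  cases n with
  | zero => simp
  | succ k =>
    rw [alt_partial k (k+1), Nat.choose_eq_zero_of_lt (Nat.lt_succ_self k)]
    simp

lemma full_interval {ι : Type*} [Fintype ι] [DecidableEq ι] (P R : Finset ι) (hPR : P ⊆ R) :
    ∑ Q ∈ univ.filter (fun Q => P ⊆ Q ∧ Q ⊆ R), (-1:ℝ)^(Q.card - P.card)
      = if P = R then 1 else 0 := by
  have := interval_card_sum P R hPR (fun m => (-1:ℝ)^(m - P.card))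
  simp only [Nat.add_sub_cancel_left] at this
  rw [this]
  rw [show (∑ x ∈ range (R.card - P.card + 1), ((R.card - P.card).choose x : ℝ) * (-1) ^ x)
      = ∑ x ∈ range (R.card - P.card + 1), (-1:ℝ) ^ x * ((R.card - P.card).choose x) from
    Finset.sum_congr rfl fun x _ => mul_comm _ _, alt_full]
  have hcard : P = R ↔ R.card - P.card = 0 := by
    constructor
    · rintro rfl; omega
    · intro h
      exact Finset.eq_of_subset_of_card_le hPR (by omega : R.card ≤ P.card)
  by_cases h : P = R
  · simp [h]
  · rw [if_neg h, if_neg (fun hh => h (hcard.2 hh))]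

lemma trunc_interval {ι : Type*} [Fintype ι] [DecidableEq ι] (P B : Finset ι) (s : ℕ)
    (hPB : P ⊆ B) (hPs : P.card ≤ s) (hBs : s < B.card) :
    ∑ Q ∈ univ.filter (fun Q => (P ⊆ Q ∧ Q ⊆ B) ∧ Q.card ≤ s), (-1:ℝ)^(Q.card - P.card)
      = (-1:ℝ)^(s - P.card) * ((B.card - P.card - 1).choose (s - P.card)) := by
  set p := P.card with hp
  set n := B.card - P.card with hn
  have hps : p ≤ s := hPs
  have hsn : s - p < n := by
    have := Finset.card_le_card hPB
    omega
  have h1 : ∑ Q ∈ univ.filter (fun Q => (P ⊆ Q ∧ Q ⊆ B) ∧ Q.card ≤ s), (-1:ℝ)^(Q.card - P.card)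
      = ∑ Q ∈ univ.filter (fun Q => P ⊆ Q ∧ Q ⊆ B),
          (if Q.card ≤ s then (-1:ℝ)^(Q.card - P.card) else 0) := by
    rw [Finset.sum_filter, Finset.sum_filter]
    apply Finset.sum_congr rfl
    intro Q _
    by_cases h1 : P ⊆ Q ∧ Q ⊆ B <;> by_cases h2 : Q.card ≤ s <;> simp [h1, h2]
  rw [h1, interval_card_sum P B hPB (fun m => if m ≤ s then (-1:ℝ)^(m - P.card) else 0)]
  have h2 : ∀ m ∈ range (n+1), (n.choose m : ℝ) * (if p + m ≤ s then (-1:ℝ)^(p + m - p) else 0)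
      = if m ∈ range (s - p + 1) then (-1:ℝ)^m * (n.choose m) else 0 := by
    intro m _
    rw [Nat.add_sub_cancel_left]
    by_cases h : p + m ≤ s
    · rw [if_pos h, if_pos (by simp; omega)]; ring
    · rw [if_neg h, if_neg (by simp; omega)]; ring
  rw [Finset.sum_congr rfl h2, Finset.sum_ite_mem, Finset.inter_eq_right.2 (by
    intro m hm; simp at hm ⊢; omega)]
  obtain ⟨k, hk⟩ : ∃ k, n = k + 1 := ⟨n - 1, by omega⟩
  rw [hk, alt_partial k (s - p)]
  norm_num

lemma big_interval {ι : Type*} [Fintype ι] [DecidableEq ι] (P B : Finset ι) (s : ℕ)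
    (hPB : P ⊆ B) (hPs : P.card ≤ s) (hBs : s < B.card) :
    ∑ Q ∈ univ.filter (fun Q => (P ⊆ Q ∧ ¬ Q.card ≤ s) ∧ Q ⊆ B), (-1:ℝ)^(Q.card - P.card)
      = -((-1:ℝ)^(s - P.card) * ((B.card - P.card - 1).choose (s - P.card))) := by
  have hfull := full_interval P B hPB
  have hne : P ≠ B := fun h => by
    subst h; omega
  rw [if_neg hne] at hfull
  have hsplit := Finset.sum_filter_add_sum_filter_not
      (univ.filter (fun Q : Finset ι => P ⊆ Q ∧ Q ⊆ B))
      (fun Q => Q.card ≤ s) (fun Q => (-1:ℝ)^(Q.card - P.card))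
  rw [Finset.filter_filter, Finset.filter_filter] at hsplit
  have he : univ.filter (fun Q : Finset ι => (P ⊆ Q ∧ ¬ Q.card ≤ s) ∧ Q ⊆ B)
      = univ.filter (fun Q : Finset ι => (P ⊆ Q ∧ Q ⊆ B) ∧ ¬ Q.card ≤ s) := by
    ext Q
    simp only [mem_filter, mem_univ, true_and]
    tauto
  rw [he]
  have ht := trunc_interval P B s hPB hPs hBs
  rw [hfull] at hsplit
  rw [ht] at hsplit
  linarith

/-- Elimination of large, non-maximal path sets: the modified Möbius inversion
formula under the sparsity heuristic. -/
theorem sparse_mobius_inversion {ι : Type*} [Fintype ι] [DecidableEq ι]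
    (f g : Finset ι → ℝ) (𝓑 : Finset (Finset ι)) (s : ℕ) (hs : 0 < s)
    (hfg : ∀ P : Finset ι, f P = ∑ Q ∈ Finset.univ.filter (fun Q => P ⊆ Q), g Q)
    (hmax : ∀ B ∈ 𝓑, ∀ B' ∈ 𝓑, ¬ B ⊂ B')
    (hsupp : ∀ P : Finset ι, g P ≠ 0 → ∃ B ∈ 𝓑, P ⊆ B)
    (hheur : ∀ P : Finset ι, s < P.card → P ∉ 𝓑 → g P = 0) :
    ∀ P : Finset ι, (∃ B ∈ 𝓑, P ⊆ B) → P.card ≤ s →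
      (∀ B ∈ 𝓑, P ⊆ B → s < B.card) →
      g P = (∑ Q ∈ Finset.univ.filter (fun Q => P ⊆ Q ∧ Q.card ≤ s),
              (-1 : ℝ) ^ (Q.card - P.card) * f Q)
            - ∑ B ∈ 𝓑.filter (fun B => P ⊆ B),
              (-1 : ℝ) ^ (s - P.card) * ((B.card - P.card - 1).choose (s - P.card)) * f B := by
  intro P hex hPs hbig
  -- f B = g B for B ∈ 𝓑
  have hfB : ∀ B ∈ 𝓑, f B = g B := by
    intro B hB
    rw [hfg]
    apply Finset.sum_eq_single_of_mem B (by simp)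
    intro R hR hne
    simp only [mem_filter, mem_univ, true_and] at hR
    by_contra hg
    obtain ⟨B', hB', hRB'⟩ := hsupp R hg
    exact hmax B hB B' hB'
      (lt_of_lt_of_le (Finset.ssubset_iff_subset_ne.2 ⟨hR, Ne.symm hne⟩) hRB')
  -- f Q via 𝓑 for large Q
  have hfQ : ∀ Q : Finset ι, ¬ Q.card ≤ s → f Q = ∑ B ∈ 𝓑.filter (fun B => Q ⊆ B), g B := by
    intro Q hQ
    rw [hfg]
    symm
    apply Finset.sum_subset
    · intro B hB
      simp only [mem_filter, mem_univ, true_and] at hB ⊢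
      exact hB.2
    · intro R hR hR'
      simp only [mem_filter, mem_univ, true_and] at hR
      by_contra hg
      have hcard : s < R.card := lt_of_lt_of_le (by omega) (Finset.card_le_card hR)
      have hR𝓑 : R ∈ 𝓑 := by
        by_contra h
        exact hg (hheur R hcard h)
      exact hR' (mem_filter.2 ⟨hR𝓑, hR⟩)
  -- Möbius inversion
  have mob : g P = ∑ Q ∈ univ.filter (fun Q => P ⊆ Q), (-1:ℝ)^(Q.card - P.card) * f Q := by
    have hswap : ∑ Q ∈ univ.filter (fun Q => P ⊆ Q), (-1:ℝ)^(Q.card - P.card) * f Q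
        = ∑ R ∈ univ.filter (fun R => P ⊆ R),
            ∑ Q ∈ univ.filter (fun Q => P ⊆ Q ∧ Q ⊆ R), (-1:ℝ)^(Q.card - P.card) * g R := by
      simp_rw [hfg, Finset.mul_sum]
      refine Finset.sum_comm' ?_
      intro Q R
      simp only [mem_filter, mem_univ, true_and]
      constructor
      · rintro ⟨h1, h2⟩; exact ⟨⟨h1, h2⟩, h1.trans h2⟩
      · rintro ⟨⟨h1, h2⟩, _⟩; exact ⟨h1, h2⟩
    rw [hswap]
    rw [Finset.sum_congr rfl (fun R hR => by
      rw [← Finset.sum_mul, full_interval P R (mem_filter.1 hR).2])]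
    rw [Finset.sum_eq_single P]
    · simp
    · intro R _ hne
      rw [if_neg (fun h => hne h.symm), zero_mul]
    · intro h
      exact absurd (mem_filter.2 ⟨mem_univ P, Finset.Subset.refl P⟩) h
  -- evaluate the heavy part
  have heavy : ∑ Q ∈ univ.filter (fun Q => P ⊆ Q ∧ ¬ Q.card ≤ s),
        (-1:ℝ)^(Q.card - P.card) * f Q
      = - ∑ B ∈ 𝓑.filter (fun B => P ⊆ B),
          (-1:ℝ)^(s - P.card) * ((B.card - P.card - 1).choose (s - P.card)) * f B := by
    rw [Finset.sum_congr rfl (fun Q hQ => by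
      rw [hfQ Q (mem_filter.1 hQ).2.2, Finset.mul_sum])]
    rw [Finset.sum_comm' (s' := fun B => univ.filter (fun Q => (P ⊆ Q ∧ ¬ Q.card ≤ s) ∧ Q ⊆ B))
        (t' := 𝓑.filter (fun B => P ⊆ B)) (by
      intro Q B
      simp only [mem_filter, mem_univ, true_and]
      constructor
      · rintro ⟨⟨h1, h2⟩, h3, h4⟩; exact ⟨⟨⟨h1, h2⟩, h4⟩, h3, h1.trans h4⟩
      · rintro ⟨⟨⟨h1, h2⟩, h4⟩, h3, _⟩; exact ⟨⟨h1, h2⟩, h3, h4⟩)]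
    rw [← Finset.sum_neg_distrib]
    apply Finset.sum_congr rfl
    intro B hB
    simp only [mem_filter] at hB
    rw [← Finset.sum_mul, big_interval P B s hB.2 hPs (hbig B hB.1 hB.2), hfB B hB.1]
    ring
  -- assemble
  have hsplit := Finset.sum_filter_add_sum_filter_not
      (univ.filter (fun Q : Finset ι => P ⊆ Q)) (fun Q => Q.card ≤ s)
      (fun Q => (-1:ℝ)^(Q.card - P.card) * f Q)
  rw [Finset.filter_filter, Finset.filter_filter] at hsplit
  rw [mob, ← hsplit, heavy]
  ring
end
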